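/- A scoring rule L : C × C → ℝ (linear in its first argument) is proper if and only if there exist a concave function H : C → ℝ and a map G : C → ℝ^A such that for every c ∈ C the vector G(c) is a supergradient of H at c (i.e., H(d) ≤ H(c) + (d − c) · G(c) for all d ∈ C) and L(d,c) = H(c) + (d − c) · G(c) for all c, d ∈ C. -/
import Mathlib


open scoped BigOperators

/-- a scoring rule `L` (linear in its first argument) is proper
if and only if there exist a concave function `H : C → ℝ` and a supergradient
selection `G` of `H` such that `L(d,c) = H(c) + (d − c) · G(c)` on `C`. -/
theorem stmt_16
    {A : Type*} [Fintype A] [Nonempty A]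
    (C : Set (EuclideanSpace ℝ A))
    (hC : C = {c : EuclideanSpace ℝ A | (∀ a, 0 ≤ c a) ∧ ∑ a, c a = 1})
    (Lvec : EuclideanSpace ℝ A → EuclideanSpace ℝ A)
    (L : EuclideanSpace ℝ A → EuclideanSpace ℝ A → ℝ)
    (hL : ∀ d c, L d c = ∑ a, d a * Lvec c a) :
    (∀ c ∈ C, ∀ d ∈ C, L d d ≤ L d c) ↔
    ∃ (H : EuclideanSpace ℝ A → ℝ) (G : EuclideanSpace ℝ A → EuclideanSpace ℝ A),
      ConcaveOn ℝ C H ∧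
      (∀ c ∈ C, ∀ d ∈ C, H d ≤ H c + ∑ a, (d a - c a) * G c a) ∧
      (∀ c ∈ C, ∀ d ∈ C, L d c = H c + ∑ a, (d a - c a) * G c a) := by
  have hconv : Convex ℝ C := by
    subst hC
    intro x hx y hy a b ha hb hab
    refine ⟨fun i => ?_, ?_⟩
    · have : (a • x + b • y) i = a * x i + b * y i := by
        simp [PiLp.add_apply, PiLp.smul_apply, smul_eq_mul]
      rw [this]
      exact add_nonneg (mul_nonneg ha (hx.1 i)) (mul_nonneg hb (hy.1 i))
    · have : ∀ i, (a • x + b • y) i = a * x i + b * y i := fun i => by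
        simp [PiLp.add_apply, PiLp.smul_apply, smul_eq_mul]
      simp only [this, Finset.sum_add_distrib, ← Finset.mul_sum, hx.2, hy.2]
      linarith
  have hrepr : ∀ c d : EuclideanSpace ℝ A,
      L d c = L c c + ∑ a, (d a - c a) * Lvec c a := by
    intro c d
    rw [hL, hL]
    have : ∑ a, (d a - c a) * Lvec c a
        = ∑ a, d a * Lvec c a - ∑ a, c a * Lvec c a := by
      rw [← Finset.sum_sub_distrib]
      exact Finset.sum_congr rfl fun a _ => by ring
    rw [this]; ring
  constructor
  · intro hproper
    refine ⟨fun c => L c c, Lvec, ⟨hconv, ?_⟩, ?_, ?_⟩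
    · intro x hx y hy a b ha hb hab
      set z := a • x + b • y with hz
      have hzC : z ∈ C := hconv hx hy ha hb hab
      have hLz : L z z = a * L x z + b * L y z := by
        rw [hL, hL, hL]
        have : ∀ i, z i = a * x i + b * y i := fun i => by
          simp [hz, PiLp.add_apply, PiLp.smul_apply, smul_eq_mul]
        simp only [this, add_mul, Finset.sum_add_distrib, Finset.mul_sum]
        ring_nf
      have h1 : L x x ≤ L x z := hproper z hzC x hx
      have h2 : L y y ≤ L y z := hproper z hzC y hy
      simp only [smul_eq_mul]
      rw [hLz]
      nlinarith
    · intro c hc d hd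
      have := hrepr c d
      linarith [hproper c hc d hd]
    · intro c hc d hd
      exact hrepr c d
  · rintro ⟨H, G, _, hsup, heq⟩ c hc d hd
    have h1 := heq c hc d hd
    have h2 := heq d hd d hd
    have h3 := hsup c hc d hd
    have h4 : ∑ a, (d a - d a) * G d a = 0 := by simp
    linarith
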